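/- Let $m \le n$ and let $\delta = (\{i_1 < \dots < i_r\}, \{j_1 < \dots < j_r\}) \in \Delta_{m,n}$ be an index pair of cardinality $r$. The rank of the subposet $\{\alpha \in \Delta_{m,n} : \alpha \ge_{st} \delta\}$ of $\Delta_{m,n}$ equals $(m+n)r - \sum_{s=1}^r (i_s + j_s) + r$. -/

import Mathlib

/-- The order `≤_st` on index pairs: `(I,J) ≤_st (K,L)` iff `|I| ≥ |K|` and the first
`|K|` entries of the increasing enumerations satisfy `i_s ≤ k_s`, `j_s ≤ l_s`. -/
def deltaLe (I J K L : Finset ℕ) : Prop :=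
  K.card ≤ I.card ∧ ∀ s < K.card,
    (I.sort (· ≤ ·)).getD s 0 ≤ (K.sort (· ≤ ·)).getD s 0 ∧
    (J.sort (· ≤ ·)).getD s 0 ≤ (L.sort (· ≤ ·)).getD s 0

def cnt (A : Finset ℕ) (y : ℕ) : ℕ := (A.filter (· ≤ y)).card

lemma getD_le_iff {A : Finset ℕ} {s y : ℕ} (hs : s < A.card) :
    (A.sort (· ≤ ·)).getD s 0 ≤ y ↔ s < cnt A y := by
  have hlen : s < (A.sort (· ≤ ·)).length := by rwa [Finset.length_sort]
  have hgd : (A.sort (· ≤ ·)).getD s 0 = A.orderEmbOfFin rfl ⟨s, hs⟩ := by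
    rw [List.getD_eq_getElem _ _ hlen, Finset.orderEmbOfFin_apply]; rfl
  set e := A.orderEmbOfFin rfl with he
  rw [hgd]
  constructor
  · intro h
    have hsub : (Finset.Iic (⟨s, hs⟩ : Fin A.card)).image e ⊆ A.filter (· ≤ y) := by
      intro x hx
      simp only [Finset.mem_image, Finset.mem_Iic] at hx
      obtain ⟨i, hi, rfl⟩ := hx
      refine Finset.mem_filter.mpr ⟨Finset.orderEmbOfFin_mem _ _ _, ?_⟩
      exact le_trans (e.monotone hi) h
    have hcard : ((Finset.Iic (⟨s, hs⟩ : Fin A.card)).image e).card = s + 1 := by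
      rw [Finset.card_image_of_injective _ e.injective, Fin.card_Iic]
    have := Finset.card_le_card hsub
    rw [hcard] at this
    exact this
  · intro h
    by_contra hlt
    push_neg at hlt
    have hsub : A.filter (· ≤ y) ⊆ (Finset.Iio (⟨s, hs⟩ : Fin A.card)).image e := by
      intro x hx
      obtain ⟨hxA, hxy⟩ := Finset.mem_filter.mp hx
      have : x ∈ Set.range e := by rw [Finset.range_orderEmbOfFin]; exact hxA
      obtain ⟨i, rfl⟩ := this
      refine Finset.mem_image.mpr ⟨i, Finset.mem_Iio.mpr ?_, rfl⟩
      exact e.strictMono.lt_iff_lt.mp (lt_of_le_of_lt hxy hlt)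
    have := Finset.card_le_card hsub
    rw [Finset.card_image_of_injective _ e.injective, Fin.card_Iio] at this
    have hc : cnt A y = (A.filter (· ≤ y)).card := rfl
    simp only [Fin.val_mk] at this
    omega

lemma le_sorted_iff_cnt {A B : Finset ℕ} (h : B.card ≤ A.card) :
    (∀ s < B.card, (A.sort (· ≤ ·)).getD s 0 ≤ (B.sort (· ≤ ·)).getD s 0) ↔
      ∀ y, cnt B y ≤ cnt A y := by
  constructor
  · intro hs y
    by_cases hc : cnt B y = 0
    · omega
    · have hcB : cnt B y ≤ B.card := Finset.card_le_card (Finset.filter_subset _ _)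
      have h1 : cnt B y - 1 < B.card := by omega
      have hb : (B.sort (· ≤ ·)).getD (cnt B y - 1) 0 ≤ y := by
        rw [getD_le_iff h1]; omega
      have ha : (A.sort (· ≤ ·)).getD (cnt B y - 1) 0 ≤ y :=
        le_trans (hs _ h1) hb
      have := (getD_le_iff (lt_of_lt_of_le h1 h)).mp ha
      omega
  · intro hy s hsB
    have hb : s < cnt B ((B.sort (· ≤ ·)).getD s 0) := by
      rw [← getD_le_iff hsB]
    have := lt_of_lt_of_le hb (hy _)
    exact (getD_le_iff (lt_of_lt_of_le hsB h)).mpr this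

lemma deltaLe_iff_cnt {I J K L : Finset ℕ} (hIJ : I.card = J.card) (hKL : K.card = L.card) :
    deltaLe I J K L ↔ K.card ≤ I.card ∧ (∀ y, cnt K y ≤ cnt I y) ∧ (∀ y, cnt L y ≤ cnt J y) := by
  unfold deltaLe
  constructor
  · rintro ⟨h1, h2⟩
    refine ⟨h1, ?_, ?_⟩
    · exact (le_sorted_iff_cnt h1).mp (fun s hs => (h2 s hs).1)
    · refine (le_sorted_iff_cnt (by omega)).mp (fun s hs => ?_)
      exact (h2 s (by omega)).2
  · rintro ⟨h1, h2, h3⟩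
    refine ⟨h1, fun s hs => ⟨?_, ?_⟩⟩
    · exact (le_sorted_iff_cnt h1).mpr h2 s hs
    · exact (le_sorted_iff_cnt (by omega)).mpr h3 s (by omega)

lemma deltaLe_refl (I J : Finset ℕ) : deltaLe I J I J :=
  ⟨le_refl _, fun _ _ => ⟨le_refl _, le_refl _⟩⟩

lemma deltaLe_trans {A B C D E F : Finset ℕ} (h1 : deltaLe A B C D) (h2 : deltaLe C D E F) :
    deltaLe A B E F := by
  obtain ⟨hc1, hs1⟩ := h1
  obtain ⟨hc2, hs2⟩ := h2
  refine ⟨le_trans hc2 hc1, fun s hs => ?_⟩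
  obtain ⟨x1, y1⟩ := hs1 s (lt_of_lt_of_le hs hc2)
  obtain ⟨x2, y2⟩ := hs2 s hs
  exact ⟨le_trans x1 x2, le_trans y1 y2⟩

lemma cnt_eq_sum (A : Finset ℕ) (y : ℕ) : cnt A y = ∑ x ∈ A, if x ≤ y then 1 else 0 :=
  Finset.card_filter _ _

lemma cnt_succ (A : Finset ℕ) (y : ℕ) :
    cnt A (y + 1) = cnt A y + (if y + 1 ∈ A then 1 else 0) := by
  rw [cnt_eq_sum, cnt_eq_sum]
  have : ∀ x ∈ A, (if x ≤ y + 1 then 1 else 0) =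
      (if x ≤ y then 1 else 0) + (if x = y + 1 then 1 else 0) := by
    intro x _; split_ifs <;> omega
  rw [Finset.sum_congr rfl this, Finset.sum_add_distrib, Finset.sum_ite_eq' A (y+1) (fun _ => 1)]

lemma cnt_le_card (A : Finset ℕ) (y : ℕ) : cnt A y ≤ A.card :=
  Finset.card_le_card (Finset.filter_subset _ _)

lemma cnt_mono_subset {K A : Finset ℕ} (h : K ⊆ A) (y : ℕ) : cnt K y ≤ cnt A y :=
  Finset.card_le_card (Finset.filter_subset_filter _ h)

lemma cnt_eq_card {A : Finset ℕ} {m y : ℕ} (hA : A ⊆ Finset.Icc 1 m) (hy : m ≤ y) :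
    cnt A y = A.card := by
  unfold cnt
  congr 1
  apply Finset.filter_true_of_mem
  intro x hx
  have := hA hx
  rw [Finset.mem_Icc] at this
  omega

lemma cnt_inj {K K' : Finset ℕ} (h0 : 0 ∉ K) (h0' : 0 ∉ K')
    (h : ∀ y, cnt K y = cnt K' y) : K = K' := by
  ext x
  cases x with
  | zero => simp [h0, h0']
  | succ y =>
    have h1 := cnt_succ K y
    have h2 := cnt_succ K' y
    have e1 := h (y + 1)
    have e2 := h y
    constructor <;> intro hx <;> by_contra hx'
    · simp only [hx, if_pos, hx', if_neg, not_false_iff] at h1 h2; omega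
    · simp only [hx, if_pos, hx', if_neg, not_false_iff] at h1 h2; omega

lemma sum_eq_cnt {A : Finset ℕ} {m : ℕ} (hA : A ⊆ Finset.Icc 1 m) :
    ∑ x ∈ A, x = ∑ y ∈ Finset.range m, (A.card - cnt A y) := by
  have h1 : ∀ y, A.card - cnt A y = (A.filter (fun x => ¬ x ≤ y)).card := by
    intro y
    have := Finset.card_filter_add_card_filter_not (s := A) (p := (· ≤ y))
    have h2 : cnt A y = (A.filter (· ≤ y)).card := rfl
    omega
  calc ∑ x ∈ A, x = ∑ x ∈ A, ∑ y ∈ Finset.range m, (if ¬ x ≤ y then 1 else 0) := by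
        apply Finset.sum_congr rfl
        intro x hx
        have hxm := hA hx
        rw [Finset.mem_Icc] at hxm
        have : (Finset.range m).filter (fun y => ¬ x ≤ y) = Finset.range x := by
          ext z; simp only [Finset.mem_filter, Finset.mem_range]; omega
        rw [← Finset.card_filter, this, Finset.card_range]
    _ = ∑ y ∈ Finset.range m, ∑ x ∈ A, (if ¬ x ≤ y then 1 else 0) := Finset.sum_comm
    _ = ∑ y ∈ Finset.range m, (A.card - cnt A y) := by
        apply Finset.sum_congr rfl
        intro y _
        rw [h1 y, Finset.card_filter]

lemma sum_eq_cnt_int {A : Finset ℕ} {m : ℕ} (hA : A ⊆ Finset.Icc 1 m) :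
    (∑ x ∈ A, (x : ℤ)) = ∑ y ∈ Finset.range m, ((A.card : ℤ) - (cnt A y : ℤ)) := by
  have h := sum_eq_cnt hA
  calc (∑ x ∈ A, (x : ℤ)) = ((∑ x ∈ A, x : ℕ) : ℤ) := by push_cast; rfl
    _ = ((∑ y ∈ Finset.range m, (A.card - cnt A y) : ℕ) : ℤ) := by rw [h]
    _ = ∑ y ∈ Finset.range m, ((A.card - cnt A y : ℕ) : ℤ) := Nat.cast_sum _ _
    _ = ∑ y ∈ Finset.range m, ((A.card : ℤ) - (cnt A y : ℤ)) :=
        Finset.sum_congr rfl fun y _ => Nat.cast_sub (cnt_le_card A y)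

lemma sum_cnt_le {A B : Finset ℕ} {m : ℕ} (hA : A ⊆ Finset.Icc 1 m) (hB : B ⊆ Finset.Icc 1 m)
    (hcnt : ∀ y, cnt B y ≤ cnt A y) :
    (∑ x ∈ A, (x : ℤ)) ≤ (∑ x ∈ B, (x : ℤ)) + (m : ℤ) * ((A.card : ℤ) - (B.card : ℤ)) ∧
      (A.card = B.card → A ≠ B → (∑ x ∈ A, (x : ℤ)) < ∑ x ∈ B, (x : ℤ)) := by
  have hAc := sum_eq_cnt_int hA
  have hBc := sum_eq_cnt_int hB
  have key : (∑ x ∈ A, (x : ℤ)) - (∑ x ∈ B, (x : ℤ)) =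
      ∑ y ∈ Finset.range m, (((A.card : ℤ) - B.card) - ((cnt A y : ℤ) - cnt B y)) := by
    rw [hAc, hBc, ← Finset.sum_sub_distrib]
    exact Finset.sum_congr rfl fun y _ => by ring
  constructor
  · have hle : ∑ y ∈ Finset.range m, (((A.card : ℤ) - B.card) - ((cnt A y : ℤ) - cnt B y)) ≤
        ∑ _y ∈ Finset.range m, ((A.card : ℤ) - B.card) := by
      apply Finset.sum_le_sum
      intro y _
      have := hcnt y
      omega
    rw [Finset.sum_const, Finset.card_range, nsmul_eq_mul] at hle
    linarith [key, hle]
  · intro hcard hne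
    have h0A : (0 : ℕ) ∉ A := fun h => by have := hA h; rw [Finset.mem_Icc] at this; omega
    have h0B : (0 : ℕ) ∉ B := fun h => by have := hB h; rw [Finset.mem_Icc] at this; omega
    have hex : ∃ y ∈ Finset.range m, cnt B y < cnt A y := by
      by_contra hc
      push_neg at hc
      apply hne
      apply cnt_inj h0A h0B
      intro y
      by_cases hy : y < m
      · have h1 := hc y (Finset.mem_range.mpr hy)
        have h2 := hcnt y
        omega
      · rw [cnt_eq_card hA (by omega), cnt_eq_card hB (by omega), hcard]
    obtain ⟨y0, hy0, hy0'⟩ := hex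
    have h2 := Finset.single_le_sum
      (f := fun y => ((cnt A y : ℤ) - cnt B y) - (((A.card : ℤ) - B.card)))
      (fun y _ => by have := hcnt y; rw [hcard]; push_cast; omega) hy0
    have h3 : ∑ y ∈ Finset.range m, (((A.card : ℤ) - B.card) - ((cnt A y : ℤ) - cnt B y)) =
        -∑ y ∈ Finset.range m, (((cnt A y : ℤ) - cnt B y) - (((A.card : ℤ) - B.card))) := by
      rw [← Finset.sum_neg_distrib]
      exact Finset.sum_congr rfl fun y _ => by ring
    have h4 : (1 : ℤ) ≤ ((cnt A y0 : ℤ) - cnt B y0) - (((A.card : ℤ) - B.card)) := by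
      rw [hcard]; push_cast; omega
    linarith [key, h2, h3, h4]

def Good (m n : ℕ) (p : Finset ℕ × Finset ℕ) : Prop :=
  p.1 ⊆ Finset.Icc 1 m ∧ p.2 ⊆ Finset.Icc 1 n ∧ p.1.card = p.2.card ∧ 1 ≤ p.1.card

def phi (m n : ℕ) (p : Finset ℕ × Finset ℕ) : ℤ :=
  (∑ x ∈ p.1, (x : ℤ)) + (∑ x ∈ p.2, (x : ℤ)) - ((m : ℤ) + (n : ℤ) + 1) * p.1.card

lemma phi_le {m n : ℕ} {p : Finset ℕ × Finset ℕ} (hp : Good m n p) : phi m n p ≤ -1 := by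
  obtain ⟨h1, h2, h3, h4⟩ := hp
  have s1 : (∑ x ∈ p.1, (x : ℤ)) ≤ (p.1.card : ℤ) * m := by
    calc (∑ x ∈ p.1, (x : ℤ)) ≤ ∑ _x ∈ p.1, (m : ℤ) := by
          apply Finset.sum_le_sum
          intro x hx
          have := h1 hx; rw [Finset.mem_Icc] at this
          exact_mod_cast this.2
      _ = (p.1.card : ℤ) * m := by rw [Finset.sum_const, nsmul_eq_mul]
  have s2 : (∑ x ∈ p.2, (x : ℤ)) ≤ (p.2.card : ℤ) * n := by
    calc (∑ x ∈ p.2, (x : ℤ)) ≤ ∑ _x ∈ p.2, (n : ℤ) := by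
          apply Finset.sum_le_sum
          intro x hx
          have := h2 hx; rw [Finset.mem_Icc] at this
          exact_mod_cast this.2
      _ = (p.2.card : ℤ) * n := by rw [Finset.sum_const, nsmul_eq_mul]
  unfold phi
  rw [← h3] at s2
  have h4' : (1 : ℤ) ≤ (p.1.card : ℤ) := by exact_mod_cast h4
  nlinarith [s1, s2, h4']

lemma phi_lt {m n : ℕ} {p q : Finset ℕ × Finset ℕ} (hp : Good m n p) (hq : Good m n q)
    (h : deltaLe p.1 p.2 q.1 q.2) (hne : p ≠ q) : phi m n p < phi m n q := by
  obtain ⟨hp1, hp2, hp3, hp4⟩ := hp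
  obtain ⟨hq1, hq2, hq3, hq4⟩ := hq
  rw [deltaLe_iff_cnt hp3 hq3] at h
  obtain ⟨hcard, hK, hL⟩ := h
  have SK := sum_cnt_le hp1 hq1 hK
  have SL := sum_cnt_le hp2 hq2 hL
  unfold phi
  by_cases hcc : q.1.card = p.1.card
  · -- same cardinality: one of the components strictly increases
    have hcc2 : q.2.card = p.2.card := by omega
    by_cases hKK : p.1 = q.1
    · have hLL : p.2 ≠ q.2 := fun h2 => hne (Prod.ext hKK h2)
      have := SL.2 hcc2.symm hLL
      have e1 : (∑ x ∈ p.1, (x : ℤ)) = ∑ x ∈ q.1, (x : ℤ) := by rw [hKK]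
      rw [hcc]
      linarith
    · have := SK.2 hcc.symm hKK
      have e2 : (∑ x ∈ p.2, (x : ℤ)) ≤ ∑ x ∈ q.2, (x : ℤ) := by
        have := SL.1
        rw [hcc2] at this
        simp at this
        linarith
      rw [hcc]
      linarith
  · -- cardinality drops
    have h1 := SK.1
    have h2 := SL.1
    have hq3' : (q.2.card : ℤ) = (q.1.card : ℤ) := by exact_mod_cast hq3.symm
    have hp3' : (p.2.card : ℤ) = (p.1.card : ℤ) := by exact_mod_cast hp3.symm
    have hlt : (q.1.card : ℤ) < (p.1.card : ℤ) := by
      have : q.1.card ≤ p.1.card := hcard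
      have : q.1.card ≠ p.1.card := hcc
      omega
    rw [hq3', hp3'] at h2
    nlinarith [h1, h2, hlt]

lemma raise_cnt {J : Finset ℕ} {j : ℕ} (hj : j ∈ J) (hj1 : j + 1 ∉ J) (y : ℕ) :
    cnt (insert (j + 1) (J.erase j)) y ≤ cnt J y := by
  rw [cnt_eq_sum, cnt_eq_sum, Finset.sum_insert (fun h => hj1 (Finset.mem_of_mem_erase h))]
  rw [← Finset.sum_erase_add J _ hj]
  have : (if j + 1 ≤ y then (1:ℕ) else 0) ≤ (if j ≤ y then 1 else 0) := by split_ifs <;> omega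
  omega

lemma raise_sum {J : Finset ℕ} {j : ℕ} (hj : j ∈ J) (hj1 : j + 1 ∉ J) :
    (∑ x ∈ insert (j + 1) (J.erase j), (x : ℤ)) = (∑ x ∈ J, (x : ℤ)) + 1 := by
  rw [Finset.sum_insert (fun h => hj1 (Finset.mem_of_mem_erase h))]
  rw [← Finset.sum_erase_add J _ hj]
  push_cast
  ring

lemma raise_card {J : Finset ℕ} {j : ℕ} (hj : j ∈ J) (hj1 : j + 1 ∉ J) :
    (insert (j + 1) (J.erase j)).card = J.card := by
  rw [Finset.card_insert_of_notMem (fun h => hj1 (Finset.mem_of_mem_erase h)),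
    Finset.card_erase_of_mem hj]
  have : 0 < J.card := Finset.card_pos.mpr ⟨j, hj⟩
  omega

lemma succ_exists {m n : ℕ} {p : Finset ℕ × Finset ℕ} (hp : Good m n p)
    (hphi : phi m n p < -1) :
    ∃ q, Good m n q ∧ deltaLe p.1 p.2 q.1 q.2 ∧ phi m n q = phi m n p + 1 := by
  obtain ⟨hp1, hp2, hp3, hp4⟩ := hp
  have hne1 : p.1.Nonempty := Finset.card_pos.mp (by omega)
  have hne2 : p.2.Nonempty := Finset.card_pos.mp (by omega)
  by_cases hn : n ∈ p.2
  · by_cases hm : m ∈ p.1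
    · -- drop case
      rcases Nat.lt_or_ge p.1.card 2 with hc1 | hc2
      · -- card = 1 : contradiction
        exfalso
        have hc : p.1.card = 1 := by omega
        obtain ⟨a, ha⟩ := Finset.card_eq_one.mp hc
        obtain ⟨b, hb⟩ := Finset.card_eq_one.mp (hp3 ▸ hc)
        rw [ha] at hm
        rw [hb] at hn
        simp only [Finset.mem_singleton] at hm hn
        unfold phi at hphi
        rw [ha, hb, ← hm, ← hn] at hphi
        simp at hphi
      · refine ⟨(p.1.erase m, p.2.erase n), ⟨?_, ?_, ?_, ?_⟩, ?_, ?_⟩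
        · exact (Finset.erase_subset _ _).trans hp1
        · exact (Finset.erase_subset _ _).trans hp2
        · simp only [Finset.card_erase_of_mem hm, Finset.card_erase_of_mem hn, hp3]
        · simp only [Finset.card_erase_of_mem hm]; omega
        · rw [deltaLe_iff_cnt hp3 (by simp only [Finset.card_erase_of_mem hm,
            Finset.card_erase_of_mem hn, hp3])]
          refine ⟨?_, fun y => cnt_mono_subset (Finset.erase_subset _ _) y,
            fun y => cnt_mono_subset (Finset.erase_subset _ _) y⟩
          simp only [Finset.card_erase_of_mem hm]; omega
        · unfold phi
          simp only
          rw [← Finset.sum_erase_add p.1 _ hm, ← Finset.sum_erase_add p.2 _ hn,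
            Finset.card_erase_of_mem hm]
          have : ((p.1.card - 1 : ℕ) : ℤ) = (p.1.card : ℤ) - 1 := by
            have : 1 ≤ p.1.card := hp4
            omega
          push_cast [this]
          ring
    · -- raise in I
      set i := p.1.max' hne1 with hi
      have him : i ∈ p.1 := Finset.max'_mem _ _
      have hiI : i ≤ m ∧ 1 ≤ i := by
        have := hp1 him; rw [Finset.mem_Icc] at this; omega
      have hilt : i < m := by
        rcases Nat.lt_or_ge i m with h | h
        · exact h
        · exfalso; apply hm; have : i = m := by omega
          rwa [← this]
      have hi1 : i + 1 ∉ p.1 := fun h => by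
        have := Finset.le_max' _ _ h; omega
      refine ⟨(insert (i + 1) (p.1.erase i), p.2), ⟨?_, hp2, ?_, ?_⟩, ?_, ?_⟩
      · intro x hx
        rcases Finset.mem_insert.mp hx with h | h
        · rw [Finset.mem_Icc]; omega
        · exact hp1 (Finset.mem_of_mem_erase h)
      · rw [raise_card him hi1]; exact hp3
      · rw [raise_card him hi1]; exact hp4
      · rw [deltaLe_iff_cnt hp3 (by rw [raise_card him hi1]; exact hp3)]
        exact ⟨by rw [raise_card him hi1], fun y => raise_cnt him hi1 y, fun y => le_refl _⟩
      · unfold phi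
        simp only
        rw [raise_sum him hi1, raise_card him hi1]
        ring
  · -- raise in J
    set j := p.2.max' hne2 with hj
    have hjm : j ∈ p.2 := Finset.max'_mem _ _
    have hjJ : j ≤ n ∧ 1 ≤ j := by
      have := hp2 hjm; rw [Finset.mem_Icc] at this; omega
    have hjlt : j < n := by
      rcases Nat.lt_or_ge j n with h | h
      · exact h
      · exfalso; apply hn; have : j = n := by omega
        rwa [← this]
    have hj1 : j + 1 ∉ p.2 := fun h => by
      have := Finset.le_max' _ _ h; omega
    refine ⟨(p.1, insert (j + 1) (p.2.erase j)), ⟨hp1, ?_, ?_, hp4⟩, ?_, ?_⟩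
    · intro x hx
      rcases Finset.mem_insert.mp hx with h | h
      · rw [Finset.mem_Icc]; omega
      · exact hp2 (Finset.mem_of_mem_erase h)
    · rw [raise_card hjm hj1]; exact hp3
    · rw [deltaLe_iff_cnt hp3 (by rw [raise_card hjm hj1]; exact hp3)]
      exact ⟨le_refl _, fun y => le_refl _, fun y => raise_cnt hjm hj1 y⟩
    · unfold phi
      simp only
      rw [raise_sum hjm hj1]
      ring

lemma chain_ex (m n : ℕ) : ∀ N : ℕ, 1 ≤ N → ∀ p : Finset ℕ × Finset ℕ, Good m n p →
    phi m n p = -(N : ℤ) →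
    ∃ f : Fin N → Finset ℕ × Finset ℕ,
      (∀ a, Good m n (f a)) ∧
      (∀ a, deltaLe p.1 p.2 (f a).1 (f a).2) ∧
      (∀ a : Fin N, phi m n (f a) = -(N : ℤ) + (a : ℕ)) ∧
      (∀ a b : Fin N, a ≤ b → deltaLe (f a).1 (f a).2 (f b).1 (f b).2) := by
  intro N
  induction N with
  | zero => omega
  | succ N ih =>
    intro _ p hp hphi
    rcases Nat.eq_zero_or_pos N with h0 | hNpos
    · subst h0
      refine ⟨fun _ => p, fun _ => hp, fun _ => deltaLe_refl _ _, ?_, ?_⟩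
      · intro a
        have ha : (a : ℕ) = 0 := by omega
        rw [hphi, ha]
        simp
      · intro a b _
        exact deltaLe_refl _ _
    · have hlt : phi m n p < -1 := by
        have h1 : (1 : ℤ) ≤ (N : ℤ) := by exact_mod_cast hNpos
        push_cast at hphi
        omega
      obtain ⟨q, hq, hdel, hq1⟩ := succ_exists hp hlt
      have hqphi : phi m n q = -(N : ℤ) := by
        rw [hq1, hphi]
        push_cast
        ring
      obtain ⟨f', hfg, hfd, hfphi, hfmono⟩ := ih hNpos q hq hqphi
      refine ⟨Fin.cases p f', ?_, ?_, ?_, ?_⟩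
      · intro a
        induction a using Fin.cases with
        | zero => exact hp
        | succ i => exact hfg i
      · intro a
        induction a using Fin.cases with
        | zero => exact deltaLe_refl _ _
        | succ i => exact deltaLe_trans hdel (hfd i)
      · intro a
        induction a using Fin.cases with
        | zero => simpa using hphi
        | succ i =>
          simp only [Fin.cases_succ, Fin.val_succ]
          rw [hfphi i]
          push_cast
          ring
      · intro a b hab
        induction a using Fin.cases with
        | zero =>
          induction b using Fin.cases with
          | zero => exact deltaLe_refl _ _
          | succ j => exact deltaLe_trans hdel (hfd j)
        | succ i =>
          induction b using Fin.cases with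
          | zero =>
            exfalso
            have h1 : (i.succ : Fin (N+1)) ≤ 0 := hab
            have := Fin.le_def.mp h1
            simp at this
          | succ j =>
            simp only [Fin.cases_succ]
            apply hfmono
            exact Fin.succ_le_succ_iff.mp hab

/-- The rank (maximal number of elements in a chain) of the subposet
`{α ∈ Δ_{m,n} : α ≥_st δ}` for an index pair `δ = (I,J)` of cardinality `r`
equals `(m+n)r - ∑ (i_s + j_s) + r`. -/
theorem stmt17 (m n : ℕ) (hmn : m ≤ n) (I J : Finset ℕ)
    (hI : I ⊆ Finset.Icc 1 m) (hJ : J ⊆ Finset.Icc 1 n) (hc : I.card = J.card)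
    (r : ℕ) (hr : I.card = r) (hr1 : 1 ≤ r) :
    ∃ N : ℕ,
      (N : ℤ) = ((m : ℤ) + (n : ℤ)) * r - (∑ x ∈ I, (x : ℤ)) - (∑ x ∈ J, (x : ℤ)) + r ∧
      IsGreatest {k : ℕ | ∃ f : Fin k → Finset ℕ × Finset ℕ,
        (∀ a, (f a).1 ⊆ Finset.Icc 1 m ∧ (f a).2 ⊆ Finset.Icc 1 n ∧
          (f a).1.card = (f a).2.card ∧ 1 ≤ (f a).1.card ∧
          deltaLe I J (f a).1 (f a).2) ∧
        (∀ a b : Fin k, a < b →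
          deltaLe (f a).1 (f a).2 (f b).1 (f b).2 ∧ f a ≠ f b)} N := by
  have hgood : Good m n (I, J) := ⟨hI, hJ, hc, by show 1 ≤ I.card; omega⟩
  have hple := phi_le hgood
  set Z : ℤ := -phi m n (I, J) with hZ
  have hZ1 : 1 ≤ Z := by omega
  refine ⟨Z.toNat, ?_, ?_, ?_⟩
  · rw [Int.toNat_of_nonneg (by omega), hZ]
    unfold phi
    simp only
    rw [hr]
    ring
  · -- membership: the explicit chain
    have hN1 : 1 ≤ Z.toNat := by omega
    have hNphi : phi m n (I, J) = -(Z.toNat : ℤ) := by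
      rw [Int.toNat_of_nonneg (by omega)]; omega
    obtain ⟨f, hfg, hfd, hfphi, hfmono⟩ := chain_ex m n Z.toNat hN1 (I, J) hgood hNphi
    refine ⟨f, ?_, ?_⟩
    · intro a
      obtain ⟨c1, c2, c3, c4⟩ := hfg a
      exact ⟨c1, c2, c3, c4, hfd a⟩
    · intro a b hab
      refine ⟨hfmono a b (le_of_lt hab), ?_⟩
      intro heq
      have h1 := hfphi a
      have h2 := hfphi b
      rw [heq] at h1
      rw [h1] at h2
      have : (a : ℕ) = (b : ℕ) := by omega
      exact absurd (Fin.ext this) (ne_of_lt hab)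
  · -- upper bound
    rintro k ⟨f, h1, h2⟩
    rcases Nat.eq_zero_or_pos k with rfl | hk
    · omega
    have hGood : ∀ a, Good m n (f a) := by
      intro a
      obtain ⟨c1, c2, c3, c4, _⟩ := h1 a
      exact ⟨c1, c2, c3, c4⟩
    have claim : ∀ t, (ht : t < k) → -(Z : ℤ) + t ≤ phi m n (f ⟨t, ht⟩) := by
      intro t
      induction t with
      | zero =>
        intro ht
        have hd : deltaLe I J (f ⟨0, ht⟩).1 (f ⟨0, ht⟩).2 := (h1 _).2.2.2.2
        by_cases heq : (I, J) = f ⟨0, ht⟩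
        · rw [← heq]; push_cast; omega
        · have := phi_lt hgood (hGood _) hd heq
          simp only [Nat.cast_zero, add_zero]
          omega
      | succ t iht =>
        intro ht
        have ht' : t < k := by omega
        have hlt : (⟨t, ht'⟩ : Fin k) < ⟨t + 1, ht⟩ :=
          Fin.mk_lt_mk.mpr (Nat.lt_succ_self t)
        obtain ⟨hd, hne⟩ := h2 _ _ hlt
        have := phi_lt (hGood ⟨t, ht'⟩) (hGood ⟨t + 1, ht⟩) hd hne
        have h0 := iht ht'
        push_cast
        push_cast at h0
        omega
    have hkk : k - 1 < k := by omega
    have hlast := claim (k - 1) hkk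
    have hle := phi_le (hGood ⟨k - 1, hkk⟩)
    omega
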